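/- Let H₁ = (V₁, E₁) and H₂ = (V₂, E₂) be contextuality scenarios, and define their product scenario with vertex set V₁ × V₂ and edges including all products e₁ × e₂ for e₁ ∈ E₁, e₂ ∈ E₂. If p₁ ∈ Q₁(H₁) with certificate M¹ and p₂ ∈ Q₁(H₂) with certificate M², then the product model p(v₁, v₂) = p₁(v₁) p₂(v₂) has certificate M with M_{(u₁,u₂),(v₁,v₂)} = M¹_{u₁v₁} M²_{u₂v₂} (and M_{1,(v₁,v₂)} = p₁(v₁)p₂(v₂), M_{11} = 1), which is positive semidefinite and satisfies the Q₁ conditions for all product edges e₁ × e₂. -/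

import Mathlib

open Kronecker Matrix

lemma kronecker_conjTranspose_real {m n : Type*} (A : Matrix m m ℝ) (B : Matrix n n ℝ) :
    (A ⊗ₖ B)ᴴ = Aᴴ ⊗ₖ Bᴴ := by
  ext ⟨i, j⟩ ⟨k, l⟩
  simp [Matrix.conjTranspose_apply, Matrix.kroneckerMap_apply]

lemma kronecker_posSemidef {m n : Type*} [Fintype m] [Fintype n]
    {A : Matrix m m ℝ} {B : Matrix n n ℝ}
    (hA : A.PosSemidef) (hB : B.PosSemidef) : (A ⊗ₖ B).PosSemidef := by
  classical
  exact hA.kronecker hB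

/-- Q₁ certificate for a probabilistic model `p` on the scenario `(V, E)`. -/
def Q1Cert {V : Type*} [Fintype V] [DecidableEq V] (E : Finset (Finset V))
    (p : V → ℝ) (M : Matrix (Option V) (Option V) ℝ) : Prop :=
  M.PosSemidef ∧
  M none none = 1 ∧
  (∀ v : V, M none (some v) = p v) ∧
  (∀ v : V, M (some v) (some v) = p v) ∧
  (∀ e ∈ E, ∀ u ∈ e, ∀ v ∈ e, u ≠ v → M (some u) (some v) = 0) ∧
  (∀ e ∈ E, ∀ v : V, ∑ u ∈ e, M (some u) (some v) = p v)

/-- Q₁ is closed under products: if `p₁ ∈ Q₁(H₁)` with certificate `M₁` and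
`p₂ ∈ Q₁(H₂)` with certificate `M₂`, then the product model
`p(v₁,v₂) = p₁(v₁)p₂(v₂)` admits the (Kronecker-type) certificate
`M_{(u₁,u₂),(v₁,v₂)} = M¹_{u₁v₁} M²_{u₂v₂}`, `M_{1,(v₁,v₂)} = p₁(v₁)p₂(v₂)`,
`M₁₁ = 1`, with respect to the edge set consisting of all products `e₁ × e₂`. -/
theorem Q1_product {V₁ V₂ : Type*} [Fintype V₁] [DecidableEq V₁]
    [Fintype V₂] [DecidableEq V₂]
    (E₁ : Finset (Finset V₁)) (E₂ : Finset (Finset V₂))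
    (p₁ : V₁ → ℝ) (p₂ : V₂ → ℝ)
    (M₁ : Matrix (Option V₁) (Option V₁) ℝ) (M₂ : Matrix (Option V₂) (Option V₂) ℝ)
    (hM₁ : Q1Cert E₁ p₁ M₁) (hM₂ : Q1Cert E₂ p₂ M₂) :
    Q1Cert ((E₁ ×ˢ E₂).image fun ee => ee.1 ×ˢ ee.2)
      (fun v : V₁ × V₂ => p₁ v.1 * p₂ v.2)
      (Matrix.of fun i j : Option (V₁ × V₂) =>
        match i, j with
        | none, none => 1
        | none, some v => p₁ v.1 * p₂ v.2
        | some u, none => p₁ u.1 * p₂ u.2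
        | some u, some v => M₁ (some u.1) (some v.1) * M₂ (some u.2) (some v.2)) := by
  obtain ⟨h1psd, h1a, h1b, h1c, h1d, h1e⟩ := hM₁
  obtain ⟨h2psd, h2a, h2b, h2c, h2d, h2e⟩ := hM₂
  have h1b' : ∀ v, M₁ (some v) none = p₁ v := fun v => by
    conv_lhs => rw [← h1psd.isHermitian]
    simpa [Matrix.conjTranspose_apply] using h1b v
  have h2b' : ∀ v, M₂ (some v) none = p₂ v := fun v => by
    conv_lhs => rw [← h2psd.isHermitian]
    simpa [Matrix.conjTranspose_apply] using h2b v
  refine ⟨?_, rfl, fun v => rfl, fun v => by simp [h1c, h2c], ?_, ?_⟩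
  · -- positive semidefiniteness: submatrix of the Kronecker product
    have key : (Matrix.of fun i j : Option (V₁ × V₂) =>
        match i, j with
        | none, none => (1 : ℝ)
        | none, some v => p₁ v.1 * p₂ v.2
        | some u, none => p₁ u.1 * p₂ u.2
        | some u, some v => M₁ (some u.1) (some v.1) * M₂ (some u.2) (some v.2)) =
        (M₁ ⊗ₖ M₂).submatrix
          (fun i : Option (V₁ × V₂) => (i.map Prod.fst, i.map Prod.snd))
          (fun i : Option (V₁ × V₂) => (i.map Prod.fst, i.map Prod.snd)) := by
      ext i j
      rcases i with _ | ⟨u1, u2⟩ <;> rcases j with _ | ⟨v1, v2⟩ <;>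
        simp [Matrix.submatrix_apply, Matrix.kroneckerMap_apply, h1a, h2a, h1b, h2b, h1b', h2b']
    rw [key]
    exact (kronecker_posSemidef h1psd h2psd).submatrix _
  · rintro e he ⟨u1, u2⟩ hu ⟨v1, v2⟩ hv hne
    simp only [Finset.mem_image, Finset.mem_product] at he
    obtain ⟨⟨e1, e2⟩, ⟨he1, he2⟩, rfl⟩ := he
    rw [Finset.mem_product] at hu hv
    by_cases h : u1 = v1
    · subst h
      have : u2 ≠ v2 := fun h => hne (by rw [h])
      simp [h2d e2 he2 u2 hu.2 v2 hv.2 this]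
    · simp [h1d e1 he1 u1 hu.1 v1 hv.1 h]
  · rintro e he ⟨v1, v2⟩
    simp only [Finset.mem_image, Finset.mem_product] at he
    obtain ⟨⟨e1, e2⟩, ⟨he1, he2⟩, rfl⟩ := he
    rw [Finset.sum_product]
    simp only [Matrix.of_apply]
    rw [← Finset.sum_mul_sum]
    simp [h1e e1 he1 v1, h2e e2 he2 v2]
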